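/- Let 0 < θ < 1 and set w_n = n^(-θ) for each positive integer n. Then for all positive integers i and k, ((1-θ)/2) · i^(-θ) ≤ (Σ_{n=(i-1)k+1}^{ik} n^(-θ)) / (Σ_{n=1}^{k} n^(-θ)) ≤ ((2 - 2^θ)/(2^(1-θ) - 1)) · i^(-θ). -/

import Mathlib

/-- Bernoulli step: `(1-θ) (j+1)^{-θ} ≤ (j+1)^{1-θ} - j^{1-θ}`. -/
lemma step_lower (θ : ℝ) (hθ0 : 0 < θ) (hθ1 : θ < 1) (j : ℕ) :
    (1 - θ) * ((j + 1 : ℕ) : ℝ) ^ (-θ) ≤ ((j + 1 : ℕ) : ℝ) ^ (1 - θ) - (j : ℝ) ^ (1 - θ) := by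
  set x : ℝ := ((j + 1 : ℕ) : ℝ) with hxdef
  have hx1 : (1 : ℝ) ≤ x := by rw [hxdef]; push_cast; linarith [Nat.cast_nonneg (α := ℝ) j]
  have hx0 : (0 : ℝ) < x := lt_of_lt_of_le one_pos hx1
  have hinv : x⁻¹ ≤ 1 := inv_le_one_of_one_le₀ hx1
  have hinv0 : 0 < x⁻¹ := inv_pos.mpr hx0
  have hj : (j : ℝ) = x * (1 + -x⁻¹) := by
    rw [hxdef]
    push_cast
    field_simp
    ring
  have hb : (1 + -x⁻¹) ^ (1 - θ) ≤ 1 + (1 - θ) * -x⁻¹ :=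
    rpow_one_add_le_one_add_mul_self (by linarith) (by linarith) (by linarith)
  have hmul : (j : ℝ) ^ (1 - θ) = x ^ (1 - θ) * (1 + -x⁻¹) ^ (1 - θ) := by
    rw [hj, Real.mul_rpow hx0.le (by linarith)]
  have hxinv : x ^ (1 - θ) * x⁻¹ = x ^ (-θ) := by
    rw [← Real.rpow_neg_one x, ← Real.rpow_add hx0]
    congr 1
    ring
  have : (j : ℝ) ^ (1 - θ) ≤ x ^ (1 - θ) - (1 - θ) * x ^ (-θ) := by
    calc (j : ℝ) ^ (1 - θ) = x ^ (1 - θ) * (1 + -x⁻¹) ^ (1 - θ) := hmul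
      _ ≤ x ^ (1 - θ) * (1 + (1 - θ) * -x⁻¹) :=
          mul_le_mul_of_nonneg_left hb (Real.rpow_nonneg hx0.le _)
      _ = x ^ (1 - θ) - (1 - θ) * (x ^ (1 - θ) * x⁻¹) := by ring
      _ = x ^ (1 - θ) - (1 - θ) * x ^ (-θ) := by rw [hxinv]
  linarith

/-- Uniform two-sided comparison of block-averaged weights with the weight `w_n = n^{-θ}`:
for `0 < θ < 1` and positive integers `i, k`,
`((1-θ)/2) i^{-θ} ≤ (Σ_{n=(i-1)k+1}^{ik} n^{-θ}) / (Σ_{n=1}^{k} n^{-θ}) ≤ ((2-2^θ)/(2^{1-θ}-1)) i^{-θ}`. -/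
theorem stmt6 (θ : ℝ) (hθ0 : 0 < θ) (hθ1 : θ < 1) (i k : ℕ) (hi : 0 < i) (hk : 0 < k) :
    (1 - θ) / 2 * (i : ℝ) ^ (-θ) ≤
        (∑ n ∈ Finset.Icc ((i - 1) * k + 1) (i * k), (n : ℝ) ^ (-θ)) /
          (∑ n ∈ Finset.Icc 1 k, (n : ℝ) ^ (-θ)) ∧
      (∑ n ∈ Finset.Icc ((i - 1) * k + 1) (i * k), (n : ℝ) ^ (-θ)) /
          (∑ n ∈ Finset.Icc 1 k, (n : ℝ) ^ (-θ)) ≤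
        (2 - 2 ^ θ) / (2 ^ (1 - θ) - 1) * (i : ℝ) ^ (-θ) := by
  have hp : (0 : ℝ) < 1 - θ := by linarith
  set W : ℝ := ∑ n ∈ Finset.Icc 1 k, (n : ℝ) ^ (-θ) with hWdef
  set B : ℝ := ∑ n ∈ Finset.Icc ((i - 1) * k + 1) (i * k), (n : ℝ) ^ (-θ) with hBdef
  have hterm : ∀ n : ℕ, 0 < n → (0 : ℝ) < (n : ℝ) ^ (-θ) := fun n hn =>
    Real.rpow_pos_of_pos (by exact_mod_cast hn) _
  have hWpos : 0 < W := by
    apply Finset.sum_pos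
    · intro n hn
      exact hterm n (by simp [Finset.mem_Icc] at hn; omega)
    · exact Finset.nonempty_Icc.mpr hk
  have hkR : (0 : ℝ) < (k : ℝ) := by exact_mod_cast hk
  have hiR : (0 : ℝ) < (i : ℝ) := by exact_mod_cast hi
  have hipow : (0 : ℝ) < (i : ℝ) ^ (-θ) := Real.rpow_pos_of_pos hiR _
  have hksplit : (k : ℝ) ^ (1 - θ) = (k : ℝ) * (k : ℝ) ^ (-θ) := by
    rw [show (1 : ℝ) - θ = 1 + -θ by ring, Real.rpow_add hkR, Real.rpow_one]
  -- lower bound on W by k^{1-θ}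
  have hWlow : (k : ℝ) ^ (1 - θ) ≤ W := by
    have h := Finset.card_nsmul_le_sum (Finset.Icc 1 k) (fun n => (n : ℝ) ^ (-θ))
      ((k : ℝ) ^ (-θ)) (fun n hn => by
        rw [Finset.mem_Icc] at hn
        have hn0 : (0 : ℝ) < (n : ℝ) := by
          have : 0 < n := hn.1
          exact_mod_cast this
        exact Real.rpow_le_rpow_of_nonpos hn0 (by exact_mod_cast hn.2) (by linarith))
    rw [Nat.card_Icc] at h
    simp only [Nat.add_sub_cancel, nsmul_eq_mul] at h
    rw [hksplit]
    exact h
  -- upper bound on W via Bernoulli + telescoping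
  have hWhigh : W ≤ (k : ℝ) ^ (1 - θ) / (1 - θ) := by
    have hre : W = ∑ j ∈ Finset.range k, ((j + 1 : ℕ) : ℝ) ^ (-θ) := by
      rw [hWdef, ← Finset.Ico_add_one_right_eq_Icc, Finset.sum_Ico_eq_sum_range]
      simp [add_comm]
    rw [hre, le_div_iff₀ hp, Finset.sum_mul]
    have htel : ∑ j ∈ Finset.range k, (((j + 1 : ℕ) : ℝ) ^ (1 - θ) - (j : ℝ) ^ (1 - θ))
        = (k : ℝ) ^ (1 - θ) := by
      rw [Finset.sum_range_sub (fun j => ((j : ℕ) : ℝ) ^ (1 - θ))]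
      simp [Real.zero_rpow (by linarith : (1 : ℝ) - θ ≠ 0)]
    calc ∑ j ∈ Finset.range k, ((j + 1 : ℕ) : ℝ) ^ (-θ) * (1 - θ)
        ≤ ∑ j ∈ Finset.range k, (((j + 1 : ℕ) : ℝ) ^ (1 - θ) - (j : ℝ) ^ (1 - θ)) := by
          apply Finset.sum_le_sum
          intro j _
          have := step_lower θ hθ0 hθ1 j
          linarith
      _ = (k : ℝ) ^ (1 - θ) := htel
  -- block cardinality
  have hcard : (Finset.Icc ((i - 1) * k + 1) (i * k)).card = k := by
    obtain ⟨j, rfl⟩ : ∃ j, i = j + 1 := ⟨i - 1, by omega⟩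
    rw [Nat.card_Icc]
    simp only [Nat.add_sub_cancel, add_mul, one_mul]
    omega
  -- block lower bound
  have hBlow : (k : ℝ) * ((i : ℝ) * k) ^ (-θ) ≤ B := by
    have h := Finset.card_nsmul_le_sum (Finset.Icc ((i - 1) * k + 1) (i * k))
      (fun n => (n : ℝ) ^ (-θ)) (((i : ℝ) * k) ^ (-θ)) (fun n hn => by
        rw [Finset.mem_Icc] at hn
        have hn0 : (0 : ℝ) < (n : ℝ) := by
          have : 0 < n := by omega
          exact_mod_cast this
        have hnik : (n : ℝ) ≤ (i : ℝ) * k := by exact_mod_cast hn.2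
        exact Real.rpow_le_rpow_of_nonpos hn0 hnik (by linarith))
    rw [hcard, nsmul_eq_mul] at h
    exact h
  have hkey : (k : ℝ) * ((i : ℝ) * k) ^ (-θ) = (i : ℝ) ^ (-θ) * (k : ℝ) ^ (1 - θ) := by
    rw [Real.mul_rpow hiR.le hkR.le, hksplit]
    ring
  constructor
  · -- lower bound
    rw [le_div_iff₀ hWpos]
    have h1 : (1 - θ) * W ≤ (k : ℝ) ^ (1 - θ) := by
      rw [le_div_iff₀ hp] at hWhigh
      linarith
    have h2 : (i : ℝ) ^ (-θ) * ((1 - θ) * W) ≤ (i : ℝ) ^ (-θ) * (k : ℝ) ^ (1 - θ) :=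
      mul_le_mul_of_nonneg_left h1 hipow.le
    have h3 : (i : ℝ) ^ (-θ) * (k : ℝ) ^ (1 - θ) ≤ B := by rw [← hkey]; exact hBlow
    nlinarith [mul_nonneg (mul_nonneg hp.le hipow.le) hWpos.le]
  · -- upper bound
    have hC : (2 - 2 ^ θ) / (2 ^ (1 - θ) - 1) = (2 : ℝ) ^ θ := by
      have hden : (0 : ℝ) < 2 ^ (1 - θ) - 1 := by
        have : (2 : ℝ) ^ (0 : ℝ) < 2 ^ (1 - θ) :=
          Real.rpow_lt_rpow_of_exponent_lt (by norm_num) (by linarith)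
        simpa using this
      rw [div_eq_iff hden.ne', mul_sub, mul_one, ← Real.rpow_add (by norm_num : (0 : ℝ) < 2)]
      norm_num
    rw [hC, div_le_iff₀ hWpos]
    rcases eq_or_lt_of_le (Nat.one_le_iff_ne_zero.mpr hi.ne') with h1 | h2
    · -- i = 1
      have hBW : B = W := by
        rw [hBdef, hWdef, ← h1]
        norm_num
      rw [hBW, ← h1, Nat.cast_one, Real.one_rpow, mul_one]
      nlinarith [Real.one_le_rpow (by norm_num : (1 : ℝ) ≤ 2) hθ0.le, hWpos]
    · -- i ≥ 2
      have hi2 : 2 ≤ i := h2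
      have hBhigh : B ≤ (k : ℝ) * ((i : ℝ) * k / 2) ^ (-θ) := by
        have h := Finset.sum_le_card_nsmul (Finset.Icc ((i - 1) * k + 1) (i * k))
          (fun n => (n : ℝ) ^ (-θ)) (((i : ℝ) * k / 2) ^ (-θ)) (fun n hn => by
            rw [Finset.mem_Icc] at hn
            have hlow : i * k ≤ 2 * ((i - 1) * k + 1) := by
              obtain ⟨j, rfl⟩ : ∃ j, i = j + 2 := ⟨i - 2, by omega⟩
              have : (j + 2 - 1) * k = (j + 1) * k := by norm_num
              rw [this]
              nlinarith [hk]
            have hnR : (i : ℝ) * k / 2 ≤ (n : ℝ) := by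
              have h2n : i * k ≤ 2 * n := le_trans hlow (by omega)
              have h2n' : ((i * k : ℕ) : ℝ) ≤ ((2 * n : ℕ) : ℝ) := by exact_mod_cast h2n
              push_cast at h2n'
              linarith
            exact Real.rpow_le_rpow_of_nonpos (by positivity) hnR (by linarith))
        rw [hcard, nsmul_eq_mul] at h
        exact h
      have hhalf : ((i : ℝ) * k / 2) ^ (-θ) = 2 ^ θ * ((i : ℝ) * k) ^ (-θ) := by
        rw [div_eq_mul_inv, Real.mul_rpow (by positivity) (by norm_num),
          Real.inv_rpow (by norm_num : (0 : ℝ) ≤ 2), ← Real.rpow_neg (by norm_num : (0 : ℝ) ≤ 2),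
          neg_neg]
        ring
      have hchain : B ≤ 2 ^ θ * ((i : ℝ) ^ (-θ) * (k : ℝ) ^ (1 - θ)) := by
        calc B ≤ (k : ℝ) * ((i : ℝ) * k / 2) ^ (-θ) := hBhigh
          _ = 2 ^ θ * ((k : ℝ) * ((i : ℝ) * k) ^ (-θ)) := by rw [hhalf]; ring
          _ = 2 ^ θ * ((i : ℝ) ^ (-θ) * (k : ℝ) ^ (1 - θ)) := by rw [hkey]
      have h2θ : (0 : ℝ) < 2 ^ θ := Real.rpow_pos_of_pos (by norm_num) _
      nlinarith [mul_le_mul_of_nonneg_left hWlow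
        (by positivity : (0 : ℝ) ≤ 2 ^ θ * (i : ℝ) ^ (-θ))]
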